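/- Let μ = Xβ with β supported on s₀, X(s₀) of full column rank, s ⊊ s₀, and suppose every column of X satisfies ‖X_j‖₂² = n. Then max_{j∈s₀∖s} (1/n)|X_jᵀ(I−H(s))μ| ≥ λ_min((1/n)X(s₀)ᵀX(s₀)) · min_{j∈s₀}|β_j|. -/

import Mathlib

open Matrix

/-- The projection matrix `H(t)` onto the column span of the columns of `X` in `t`. -/
noncomputable def proj {n p : ℕ} (X : Matrix (Fin n) (Fin p) ℝ) (t : Finset (Fin p)) :
    Matrix (Fin n) (Fin n) ℝ :=
  let Xt : Matrix (Fin n) {x // x ∈ t} ℝ := Matrix.of fun i k => X i k.1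
  Xt * (Xtᵀ * Xt)⁻¹ * Xtᵀ

lemma rayleigh_min {m : Type*} [Fintype m] [DecidableEq m] [Nonempty m]
    {A : Matrix m m ℝ} (hA : A.IsHermitian) (c : m → ℝ) :
    (⨅ i, hA.eigenvalues i) * (c ⬝ᵥ c) ≤ c ⬝ᵥ (A *ᵥ c) := by
  set U : Matrix m m ℝ := (hA.eigenvectorUnitary : Matrix m m ℝ) with hU
  have hUs : star U = Uᵀ := by
    ext i j; simp [Matrix.star_apply]
  set y : m → ℝ := Uᵀ *ᵥ c with hy
  have h1 : U * Uᵀ = 1 := by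
    rw [← hUs]; exact Unitary.coe_mul_star_self hA.eigenvectorUnitary
  have hyy : y ⬝ᵥ y = c ⬝ᵥ c := by
    rw [hy, mulVec_transpose, ← dotProduct_mulVec, ← mulVec_transpose, mulVec_mulVec, h1,
      one_mulVec]
  have hAc : c ⬝ᵥ (A *ᵥ c) = ∑ i, hA.eigenvalues i * (y i)^2 := by
    conv_lhs => rw [hA.spectral_theorem, Unitary.conjStarAlgAut_apply]
    rw [hUs, ← mulVec_mulVec, ← mulVec_mulVec, dotProduct_mulVec, ← hU, ← mulVec_transpose, ← hy]
    simp [dotProduct, Matrix.mulVec_diagonal, pow_two]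
    exact Finset.sum_congr rfl fun i _ => by ring
  rw [hAc, ← hyy]
  have hinf : ∀ i, (⨅ j, hA.eigenvalues j) ≤ hA.eigenvalues i := fun i =>
    ciInf_le (Finite.bddBelow_range _) i
  calc (⨅ j, hA.eigenvalues j) * (y ⬝ᵥ y) = ∑ i, (⨅ j, hA.eigenvalues j) * (y i * y i) := by
        simp [dotProduct, Finset.mul_sum]
    _ ≤ ∑ i, hA.eigenvalues i * (y i)^2 := by
        refine Finset.sum_le_sum fun i _ => ?_
        rw [← pow_two]
        exact mul_le_mul_of_nonneg_right (hinf i) (sq_nonneg _)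

lemma gram_posdef {n : ℕ} {m : Type*} [Fintype m] [DecidableEq m]
    {M : Matrix (Fin n) m ℝ} (h : LinearIndependent ℝ fun k : m => fun i => M i k) :
    (Mᵀ * M).PosDef := by
  refine posDef_iff_dotProduct_mulVec.mpr ⟨by simpa using isHermitian_conjTranspose_mul_self M, fun x hx => ?_⟩
  have hMx : M *ᵥ x ≠ 0 := by
    intro hzero
    apply hx
    have := Fintype.linearIndependent_iff.mp h x ?_
    · funext k; exact this k
    · funext i
      have := congrFun hzero i
      simpa [Matrix.mulVec, dotProduct, Finset.sum_apply, mul_comm] using this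
  rw [star_trivial, ← mulVec_mulVec, dotProduct_mulVec, vecMul_transpose]
  have h1 : 0 ≤ (M *ᵥ x) ⬝ᵥ (M *ᵥ x) := Finset.sum_nonneg fun i _ => mul_self_nonneg _
  exact h1.lt_of_ne fun e => hMx (dotProduct_self_eq_zero.mp e.symm)

lemma gram_inv_mul {n : ℕ} {m : Type*} [Fintype m] [DecidableEq m]
    {M : Matrix (Fin n) m ℝ} (h : LinearIndependent ℝ fun k : m => fun i => M i k) :
    (Mᵀ * M)⁻¹ * (Mᵀ * M) = 1 :=
  nonsing_inv_mul _ (isUnit_iff_isUnit_det _ |>.mp (gram_posdef h).isUnit)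

set_option maxHeartbeats 1600000 in
/-- with `μ = Xβ`, `β` supported on `s₀`, `‖X_j‖₂² = n`, and `s ⊊ s₀`,
`max_{j∈s₀∖s} (1/n)|X_jᵀ(I−H(s))μ| ≥ λ_min((1/n)X(s₀)ᵀX(s₀)) · min_{j∈s₀}|β_j|`. -/
theorem stmt17 {n p : ℕ} (hn : 0 < n) (X : Matrix (Fin n) (Fin p) ℝ)
    (s s₀ : Finset (Fin p)) (hss : s ⊂ s₀)
    (hrank : LinearIndependent ℝ fun k : {x // x ∈ s₀} => fun i => X i k.1)
    (hranks : LinearIndependent ℝ fun k : {x // x ∈ s} => fun i => X i k.1)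
    (β : Fin p → ℝ) (hsupp : ∀ j ∉ s₀, β j = 0)
    (hX : ∀ j, ∑ i, (X i j) ^ 2 = (n : ℝ)) :
    let μ : Fin n → ℝ := X *ᵥ β
    let Xs₀ : Matrix (Fin n) {x // x ∈ s₀} ℝ := Matrix.of fun i k => X i k.1
    ∃ hG : (((n : ℝ)⁻¹) • (Xs₀ᵀ * Xs₀)).IsHermitian,
      (⨅ i, hG.eigenvalues i) *
          s₀.inf'
            (by obtain ⟨x, hx⟩ := Finset.sdiff_nonempty.mpr hss.not_subset
                exact ⟨x, (Finset.mem_sdiff.mp hx).1⟩)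
            (fun j => |β j|) ≤
        (s₀ \ s).sup' (Finset.sdiff_nonempty.mpr hss.not_subset)
          fun j => (1 / (n : ℝ)) * |(fun i => X i j) ⬝ᵥ ((1 - proj X s) *ᵥ μ)| := by
  classical
  intro μ Xs₀
  have hn' : (0:ℝ) < n := by exact_mod_cast hn
  obtain ⟨j₁, hj₁⟩ := Finset.sdiff_nonempty.mpr hss.not_subset
  haveI : Nonempty {x // x ∈ s₀} := ⟨⟨j₁, (Finset.mem_sdiff.mp hj₁).1⟩⟩
  set Xs : Matrix (Fin n) {x // x ∈ s} ℝ := Matrix.of (fun i k => X i k.1) with hXsdef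
  have hinv1 : (Xsᵀ * Xs)⁻¹ * (Xsᵀ * Xs) = 1 := gram_inv_mul hranks
  set H : Matrix (Fin n) (Fin n) ℝ := Xs * (Xsᵀ * Xs)⁻¹ * Xsᵀ with hH
  have hprojH : proj X s = H := rfl
  have hGsymm : (Xsᵀ * Xs)⁻¹ᵀ = (Xsᵀ * Xs)⁻¹ := by
    rw [transpose_nonsing_inv, transpose_mul, transpose_transpose]
  have hHsymm : Hᵀ = H := by
    rw [hH, transpose_mul, transpose_mul, transpose_transpose, hGsymm, ← Matrix.mul_assoc]
  have hHM : H * Xs = Xs := by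
    rw [hH, Matrix.mul_assoc, Matrix.mul_assoc, hinv1, Matrix.mul_one]
  have hHH : H * H = H := by
    calc H * H = Xs * ((Xsᵀ * Xs)⁻¹ * ((Xsᵀ * Xs) * ((Xsᵀ * Xs)⁻¹ * Xsᵀ))) := by
          rw [hH]; simp only [Matrix.mul_assoc]
      _ = H := by
          rw [← Matrix.mul_assoc ((Xsᵀ * Xs)⁻¹), hinv1, Matrix.one_mul, hH, Matrix.mul_assoc]
  set P : Matrix (Fin n) (Fin n) ℝ := 1 - H with hP
  have hPsymm : Pᵀ = P := by rw [hP, transpose_sub, transpose_one, hHsymm]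
  have hPP : P * P = P := by
    have : P * P = 1 - H - (H - H * H) := by rw [hP]; noncomm_ring
    rw [this, hHH, sub_self, sub_zero]
  have hPXs : P * Xs = 0 := by rw [hP, Matrix.sub_mul, Matrix.one_mul, hHM, sub_self]
  set v : Fin n → ℝ := P *ᵥ μ with hv
  -- columns in s are killed
  have hcol : ∀ j ∈ s, (fun i => X i j) ⬝ᵥ v = 0 := by
    intro j hj
    have hXj : (fun i => X i j) = Xs *ᵥ Pi.single ⟨j, hj⟩ 1 := by
      funext i; simp [Xs, mulVec_single]
    have hXsP : Xsᵀ * P = 0 := by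
      have := congrArg transpose hPXs
      rwa [transpose_mul, hPsymm, transpose_zero] at this
    rw [hXj, dotProduct_comm, dotProduct_mulVec, ← mulVec_transpose, hv, mulVec_mulVec, hXsP,
      zero_mulVec, zero_dotProduct]
  -- Δ = μ ⬝ᵥ v = v ⬝ᵥ v
  have hΔ : μ ⬝ᵥ v = v ⬝ᵥ v := by
    have h1 : v ⬝ᵥ v = (μ ᵥ* Pᵀ) ⬝ᵥ (P *ᵥ μ) := by rw [hv, vecMul_transpose]
    rw [h1, hPsymm, ← dotProduct_mulVec, mulVec_mulVec, hPP, ← hv]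
  have hμdef : μ = X *ᵥ β := rfl
  -- split of μ ⬝ᵥ v over s₀ \ s
  have hsplit : μ ⬝ᵥ v = ∑ j ∈ s₀ \ s, β j * ((fun i => X i j) ⬝ᵥ v) := by
    have h0 : μ ⬝ᵥ v = ∑ j, β j * ((fun i => X i j) ⬝ᵥ v) := by
      rw [hμdef]
      simp only [dotProduct, Matrix.mulVec, dotProduct, Finset.sum_mul, Finset.mul_sum]
      rw [Finset.sum_comm]
      exact Finset.sum_congr rfl fun j _ => Finset.sum_congr rfl fun i _ => by ring
    rw [h0]
    symm
    apply Finset.sum_subset (Finset.subset_univ _)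
    intro j _ hj
    by_cases h1 : j ∈ s₀
    · have h2 : j ∈ s := by
        by_contra h2; exact hj (Finset.mem_sdiff.mpr ⟨h1, h2⟩)
      rw [hcol j h2, mul_zero]
    · rw [hsupp j h1, zero_mul]
  have hnesd : (s₀ \ s).Nonempty := ⟨j₁, hj₁⟩
  have hne₀ : s₀.Nonempty := ⟨j₁, (Finset.mem_sdiff.mp hj₁).1⟩
  set B₁ := ∑ j ∈ s₀ \ s, |β j| with hB₁def
  set M₁ := (s₀ \ s).sup' hnesd (fun j => |(fun i => X i j) ⬝ᵥ v|) with hM₁def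
  have hM₁nonneg : 0 ≤ M₁ := by
    rw [hM₁def]
    exact le_trans (abs_nonneg ((fun i => X i j₁) ⬝ᵥ v))
      (Finset.le_sup' (fun j => |(fun i => X i j) ⬝ᵥ v|) hj₁)
  have hupper : v ⬝ᵥ v ≤ B₁ * M₁ := by
    rw [← hΔ, hsplit, hB₁def, hM₁def, Finset.sum_mul]
    refine Finset.sum_le_sum fun j hj => ?_
    calc β j * ((fun i => X i j) ⬝ᵥ v) ≤ |β j * ((fun i => X i j) ⬝ᵥ v)| := le_abs_self _
      _ = |β j| * |(fun i => X i j) ⬝ᵥ v| := abs_mul _ _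
      _ ≤ |β j| * (s₀ \ s).sup' hnesd (fun j => |(fun i => X i j) ⬝ᵥ v|) :=
          mul_le_mul_of_nonneg_left
            (Finset.le_sup' (fun j => |(fun i => X i j) ⬝ᵥ v|) hj) (abs_nonneg _)
  -- lower bound: v = Xs₀ *ᵥ c
  set b : {x // x ∈ s₀} → ℝ := fun k => β k.1 with hb
  have hμXb : μ = Xs₀ *ᵥ b := by
    funext i
    show (X *ᵥ β) i = (Xs₀ *ᵥ b) i
    simp only [Matrix.mulVec, dotProduct]
    calc ∑ j, X i j * β j = ∑ j ∈ s₀, X i j * β j :=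
          (Finset.sum_subset (Finset.subset_univ s₀)
            (fun j _ hj => by rw [hsupp j hj, mul_zero])).symm
      _ = ∑ k : {x // x ∈ s₀}, X i k.1 * β k.1 :=
          (Finset.sum_coe_sort s₀ (fun j => X i j * β j)).symm
      _ = ∑ k : {x // x ∈ s₀}, Xs₀ i k * b k := rfl
  set a : {x // x ∈ s} → ℝ := (Xsᵀ * Xs)⁻¹ *ᵥ (Xsᵀ *ᵥ μ) with ha
  have hHμ : H *ᵥ μ = Xs *ᵥ a := by
    rw [hH, ha, ← mulVec_mulVec, ← mulVec_mulVec]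
  set g : Fin p → ℝ := fun j => if h : j ∈ s then a ⟨j, h⟩ else 0 with hg
  set a' : {x // x ∈ s₀} → ℝ := fun k => g k.1 with ha'
  have hXsa : Xs *ᵥ a = Xs₀ *ᵥ a' := by
    funext i
    show ∑ k : {x // x ∈ s}, Xs i k * a k = ∑ k : {x // x ∈ s₀}, Xs₀ i k * a' k
    calc ∑ k : {x // x ∈ s}, Xs i k * a k = ∑ k : {x // x ∈ s}, X i k.1 * g k.1 := by
          refine Finset.sum_congr rfl fun k _ => ?_
          rw [hg]; simp only [dif_pos k.2]; rfl
      _ = ∑ j ∈ s, X i j * g j := Finset.sum_coe_sort s (fun j => X i j * g j)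
      _ = ∑ j ∈ s₀, X i j * g j := by
          refine Finset.sum_subset hss.subset fun j _ hj => ?_
          rw [hg]; simp [dif_neg hj]
      _ = ∑ k : {x // x ∈ s₀}, X i k.1 * g k.1 :=
          (Finset.sum_coe_sort s₀ (fun j => X i j * g j)).symm
      _ = ∑ k : {x // x ∈ s₀}, Xs₀ i k * a' k := rfl
  set c : {x // x ∈ s₀} → ℝ := b - a' with hc
  have hvXc : v = Xs₀ *ᵥ c := by
    rw [hv, hP, Matrix.sub_mulVec, Matrix.one_mulVec, hHμ, hXsa, hc, hμXb, ← Matrix.mulVec_sub]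
  have hca : ∀ (j : Fin p) (h : j ∈ s₀), j ∉ s → c ⟨j, h⟩ = β j := by
    intro j h hj
    rw [hc]
    show b ⟨j, h⟩ - a' ⟨j, h⟩ = β j
    rw [hb, ha', hg]
    simp [dif_neg hj]
  -- PSD and Rayleigh
  have hpsd : (((n : ℝ)⁻¹) • (Xs₀ᵀ * Xs₀)).PosSemidef := by
    refine posSemidef_iff_dotProduct_mulVec.mpr ⟨?_, fun x => ?_⟩
    · show _ᴴ = _
      simp [conjTranspose_smul, conjTranspose_mul, conjTranspose_eq_transpose_of_trivial,
        transpose_mul, transpose_transpose]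
    · rw [smul_mulVec, dotProduct_smul, smul_eq_mul]
      have h2 := (posSemidef_iff_dotProduct_mulVec.mp (posSemidef_conjTranspose_mul_self Xs₀)).2 x
      have hnn : (0:ℝ) ≤ (n : ℝ)⁻¹ := by positivity
      exact mul_nonneg hnn h2
  refine ⟨hpsd.1, ?_⟩
  set lam := ⨅ i, hpsd.1.eigenvalues i with hlamdef
  have hlam0 : 0 ≤ lam := le_ciInf fun i => hpsd.eigenvalues_nonneg i
  have hray := rayleigh_min hpsd.1 c
  have hΔlow : (n : ℝ) * (lam * (c ⬝ᵥ c)) ≤ v ⬝ᵥ v := by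
    have h1 : c ⬝ᵥ ((((n : ℝ)⁻¹) • (Xs₀ᵀ * Xs₀)) *ᵥ c)
        = (n:ℝ)⁻¹ * (c ⬝ᵥ ((Xs₀ᵀ * Xs₀) *ᵥ c)) := by
      rw [smul_mulVec, dotProduct_smul, smul_eq_mul]
    have h2 : v ⬝ᵥ v = c ⬝ᵥ ((Xs₀ᵀ * Xs₀) *ᵥ c) := by
      conv_rhs => rw [← mulVec_mulVec, dotProduct_mulVec, vecMul_transpose]
      rw [hvXc]
    rw [h2]
    calc (n:ℝ) * (lam * (c ⬝ᵥ c))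
        ≤ (n:ℝ) * ((n:ℝ)⁻¹ * (c ⬝ᵥ ((Xs₀ᵀ * Xs₀) *ᵥ c))) :=
          mul_le_mul_of_nonneg_left (hray.trans_eq h1) (le_of_lt hn')
      _ = c ⬝ᵥ ((Xs₀ᵀ * Xs₀) *ᵥ c) := by field_simp
  set B₂ := ∑ j ∈ s₀ \ s, (β j)^2 with hB₂def
  have hB₂cc : B₂ ≤ c ⬝ᵥ c := by
    have h1 : c ⬝ᵥ c = ∑ j ∈ s₀, (if h : j ∈ s₀ then (c ⟨j, h⟩)^2 else 0) := by
      have e1 : c ⬝ᵥ c = ∑ k : {x // x ∈ s₀}, (c k)^2 := by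
        simp [dotProduct, pow_two]
      rw [e1, ← Finset.sum_coe_sort s₀ (fun j => if h : j ∈ s₀ then (c ⟨j, h⟩)^2 else 0)]
      exact Finset.sum_congr rfl fun k _ => by rw [dif_pos k.2]
    have h2 : B₂ = ∑ j ∈ s₀ \ s, (if h : j ∈ s₀ then (c ⟨j, h⟩)^2 else 0) := by
      rw [hB₂def]
      refine Finset.sum_congr rfl fun j hj => ?_
      obtain ⟨h1', h2'⟩ := Finset.mem_sdiff.mp hj
      rw [dif_pos h1', hca j h1' h2']
    rw [h1, h2]
    refine Finset.sum_le_sum_of_subset_of_nonneg Finset.sdiff_subset fun j hj _ => ?_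
    rw [dif_pos hj]
    positivity
  have hm₀B₂ : s₀.inf' hne₀ (fun j => |β j|) * B₁ ≤ B₂ := by
    rw [hB₁def, hB₂def, Finset.mul_sum]
    refine Finset.sum_le_sum fun j hj => ?_
    have h1 : s₀.inf' hne₀ (fun j => |β j|) ≤ |β j| :=
      Finset.inf'_le _ (Finset.mem_sdiff.mp hj).1
    calc s₀.inf' hne₀ (fun j => |β j|) * |β j| ≤ |β j| * |β j| :=
          mul_le_mul_of_nonneg_right h1 (abs_nonneg _)
      _ = (β j)^2 := by rw [abs_mul_abs_self, ← pow_two]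
  clear_value Xs H P v b a g a' c lam B₁ M₁ B₂
  -- identify goal RHS with (1/n) * M₁ bound
  have hgoalRHS : (1 / (n:ℝ)) * M₁ ≤
      (s₀ \ s).sup' (Finset.sdiff_nonempty.mpr hss.not_subset)
        (fun j => (1 / (n : ℝ)) * |(fun i => X i j) ⬝ᵥ ((1 - proj X s) *ᵥ μ)|) := by
    obtain ⟨j₂, hj₂mem, hj₂eq⟩ :=
      Finset.exists_mem_eq_sup' hnesd (fun j => |(fun i => X i j) ⬝ᵥ v|)
    have hveq : (1 - proj X s) *ᵥ μ = v := by rw [hprojH, ← hP, ← hv]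
    rw [hveq, hM₁def, hj₂eq]
    exact Finset.le_sup' (fun j => (1 / (n : ℝ)) * |(fun i => X i j) ⬝ᵥ v|) hj₂mem
  refine le_trans ?_ hgoalRHS
  -- final arithmetic
  have hm₀nonneg : 0 ≤ s₀.inf' hne₀ (fun j => |β j|) :=
    Finset.le_inf' _ _ fun j _ => abs_nonneg _
  have hinfeq : s₀.inf'
      (show s₀.Nonempty by
        obtain ⟨x, hx⟩ := Finset.sdiff_nonempty.mpr hss.not_subset
        exact ⟨x, (Finset.mem_sdiff.mp hx).1⟩) (fun j => |β j|)
      = s₀.inf' hne₀ (fun j => |β j|) := rfl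
  by_cases hB₁0 : B₁ = 0
  · have hzero : |β j₁| = 0 := by
      have h := (Finset.sum_eq_zero_iff_of_nonneg fun j _ => abs_nonneg (β j)).mp
        (hB₁def ▸ hB₁0) j₁ hj₁
      exact h
    have hm0 : s₀.inf' hne₀ (fun j => |β j|) = 0 :=
      le_antisymm
        (le_trans (Finset.inf'_le _ (Finset.mem_sdiff.mp hj₁).1) (le_of_eq hzero))
        hm₀nonneg
    calc lam * s₀.inf' _ (fun j => |β j|) = lam * s₀.inf' hne₀ (fun j => |β j|) := rfl
      _ = 0 := by rw [hm0, mul_zero]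
      _ ≤ (1 / (n:ℝ)) * M₁ := mul_nonneg (by positivity) hM₁nonneg
  · have hB₁pos : 0 < B₁ :=
      lt_of_le_of_ne (hB₁def ▸ Finset.sum_nonneg fun j _ => abs_nonneg _) (Ne.symm hB₁0)
    have hchain : (n:ℝ) * (lam * (s₀.inf' hne₀ (fun j => |β j|) * B₁)) ≤ B₁ * M₁ := by
      have h1 : (n:ℝ) * (lam * (s₀.inf' hne₀ (fun j => |β j|) * B₁)) ≤ (n:ℝ) * (lam * B₂) := by
        have := mul_le_mul_of_nonneg_left hm₀B₂ hlam0
        nlinarith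
      have h2 : (n:ℝ) * (lam * B₂) ≤ v ⬝ᵥ v := by
        have := mul_le_mul_of_nonneg_left hB₂cc hlam0
        calc (n:ℝ) * (lam * B₂) ≤ (n:ℝ) * (lam * (c ⬝ᵥ c)) := by nlinarith
          _ ≤ v ⬝ᵥ v := hΔlow
      exact le_trans h1 (le_trans h2 hupper)
    show lam * s₀.inf' hne₀ (fun j => |β j|) ≤ (1 / (n:ℝ)) * M₁
    have key : (lam * s₀.inf' hne₀ (fun j => |β j|)) * ((n:ℝ) * B₁)
        ≤ ((1 / (n:ℝ)) * M₁) * ((n:ℝ) * B₁) := by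
      calc (lam * s₀.inf' hne₀ (fun j => |β j|)) * ((n:ℝ) * B₁)
          = (n:ℝ) * (lam * (s₀.inf' hne₀ (fun j => |β j|) * B₁)) := by ring
        _ ≤ B₁ * M₁ := hchain
        _ = ((1 / (n:ℝ)) * M₁) * ((n:ℝ) * B₁) := by
            field_simp
    exact le_of_mul_le_mul_right key (mul_pos hn' hB₁pos)
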